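/- Let 𝒜 : ℝ^{d×d} → ℝ^m be linear, ω ∈ ℝ^m with ‖ω‖₂ ≤ δ, X⋆ ∈ ℝ^{d×d} with rank(X⋆) ≤ r, y = 𝒜(X⋆) + ω, and μ > 0. Suppose the iterates satisfy rank(X_t) < 2r, rank(X_{t+1}) < 2r, and ‖X_t − X⋆‖_F ≤ Δ_t, where X_{t+1} = argmin_X { λ_t μ ‖X‖_* + ½‖X − (X_t − μ 𝒜ᵀ(𝒜(X_t) − y))‖_F² } with λ_t = (ξ_r δ + ρ_{r,3r} Δ_t/μ)/√r. Then ‖X_{t+1} − X⋆‖_F ≤ 2 ρ_{3r,3r} Δ_t + 2 ξ_{3r} μ δ. -/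

import Mathlib

open MeasureTheory ProbabilityTheory

noncomputable section

def l2norm {n : ℕ} (x : Fin n → ℝ) : ℝ := Real.sqrt (∑ i, x i ^ 2)

/-- Frobenius (trace) inner product. -/
def fip {d : ℕ} (X Y : Matrix (Fin d) (Fin d) ℝ) : ℝ := ∑ i, ∑ j, X i j * Y i j

/-- Frobenius norm. -/
def frob {d : ℕ} (X : Matrix (Fin d) (Fin d) ℝ) : ℝ := Real.sqrt (∑ i, ∑ j, X i j ^ 2)

/-- Nuclear norm: sum of the singular values (square roots of eigenvalues of `XᴴX`). -/
def nucNorm {d : ℕ} (X : Matrix (Fin d) (Fin d) ℝ) : ℝ :=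
  ∑ i, Real.sqrt ((Matrix.isHermitian_conjTranspose_mul_self X).eigenvalues i)

/-- Frobenius-norm unit sphere of `d × d` matrices. -/
def frobSphere (d : ℕ) : Set (Matrix (Fin d) (Fin d) ℝ) := {X | frob X = 1}

/-- Matrices of rank at most `r`. -/
def lowRank (d r : ℕ) : Set (Matrix (Fin d) (Fin d) ℝ) := {X | X.rank ≤ r}

/-- Measurement map `𝒜(X)_i = ⟨A_i, X⟩_F` determined by its rows `A i`. -/
def opA {m d : ℕ} (A : Fin m → Matrix (Fin d) (Fin d) ℝ) (X : Matrix (Fin d) (Fin d) ℝ) :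
    Fin m → ℝ := fun i => fip (A i) X

/-- Adjoint `𝒜ᵀ(y) = ∑ i, y_i A_i`. -/
def opAT {m d : ℕ} (A : Fin m → Matrix (Fin d) (Fin d) ℝ) (y : Fin m → ℝ) :
    Matrix (Fin d) (Fin d) ℝ := ∑ i, y i • A i

/-- Restricted singular value `ρ(P,Q) = sup_{V∈P,U∈Q} ⟨V, (I - μ 𝒜ᵀ𝒜)(U)⟩`. -/
def rsRhoM {m d : ℕ} (A : Fin m → Matrix (Fin d) (Fin d) ℝ) (μ : ℝ)
    (P Q : Set (Matrix (Fin d) (Fin d) ℝ)) : ℝ :=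
  sSup {t | ∃ V ∈ P, ∃ U ∈ Q, t = fip V (U - μ • opAT A (opA A U))}

/-- Restricted singular value `ξ(P) = sup_{V∈P} ⟨V, 𝒜ᵀ(w/‖w‖₂)⟩`. -/
def rsXiM {m d : ℕ} (A : Fin m → Matrix (Fin d) (Fin d) ℝ) (w : Fin m → ℝ)
    (P : Set (Matrix (Fin d) (Fin d) ℝ)) : ℝ :=
  sSup {t | ∃ V ∈ P, t = fip V (opAT A ((l2norm w)⁻¹ • w))}

/-- Gaussian complexity of a set of matrices. -/
def gcompM {d : ℕ} (C : Set (Matrix (Fin d) (Fin d) ℝ)) : ℝ :=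
  ∫ g : Fin d → Fin d → ℝ, sSup ((fun X => |fip (Matrix.of g) X|) '' C)
    ∂(Measure.pi fun _ : Fin d => Measure.pi fun _ : Fin d => gaussianReal 0 1)

def psi2 {Ω : Type*} [MeasureSpace Ω] (Z : Ω → ℝ) : ℝ :=
  sInf {t | 0 < t ∧ ∫ ω, Real.exp (Z ω ^ 2 / t ^ 2) ≤ 2}

/-- ψ₂-norm of a random matrix, viewed as a random vector in `ℝ^{d²}`. -/
def mpsi2 {Ω : Type*} [MeasureSpace Ω] {d : ℕ} (X : Ω → Matrix (Fin d) (Fin d) ℝ) : ℝ :=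
  sSup {t | ∃ U ∈ frobSphere d, t = psi2 (fun ω => fip (X ω) U)}

/-- A random matrix is centered and isotropic (as a random vector in `ℝ^{d²}`). -/
def centIsoM {Ω : Type*} [MeasureSpace Ω] {d : ℕ} (X : Ω → Matrix (Fin d) (Fin d) ℝ) : Prop :=
  (∀ p q, ∫ ω, X ω p q = 0) ∧
    ∀ p q p' q', ∫ ω, X ω p q * X ω p' q' = if p = p' ∧ q = q' then (1 : ℝ) else 0

end


section basics
variable {d : ℕ} (X Y Z : Matrix (Fin d) (Fin d) ℝ)

lemma fip_comm : fip X Y = fip Y X := by simp [fip, mul_comm]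

lemma fip_add_right : fip X (Y + Z) = fip X Y + fip X Z := by
  simp [fip, Matrix.add_apply, mul_add, Finset.sum_add_distrib]

lemma fip_sub_right : fip X (Y - Z) = fip X Y - fip X Z := by
  simp [fip, Matrix.sub_apply, mul_sub, Finset.sum_sub_distrib]

lemma fip_add_left : fip (X + Y) Z = fip X Z + fip Y Z := by
  rw [fip_comm, fip_add_right, fip_comm Z X, fip_comm Z Y]

lemma fip_sub_left : fip (X - Y) Z = fip X Z - fip Y Z := by
  rw [fip_comm, fip_sub_right, fip_comm Z X, fip_comm Z Y]

lemma fip_smul_right (c : ℝ) : fip X (c • Y) = c * fip X Y := by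
  simp [fip, Matrix.smul_apply, Finset.mul_sum, mul_left_comm, smul_eq_mul]

lemma fip_smul_left (c : ℝ) : fip (c • X) Y = c * fip X Y := by
  rw [fip_comm, fip_smul_right, fip_comm]

lemma fip_zero_right : fip X 0 = 0 := by simp [fip]

lemma fip_neg_left : fip (-X) Y = - fip X Y := by
  simp [fip, neg_mul, Finset.sum_neg_distrib]

lemma frob_nonneg : 0 ≤ frob X := Real.sqrt_nonneg _

lemma frob_sq : frob X ^ 2 = fip X X := by
  rw [frob, Real.sq_sqrt]
  · simp [fip, sq]
  · positivity

lemma frob_zero : frob (0 : Matrix (Fin d) (Fin d) ℝ) = 0 := by simp [frob]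

lemma frob_smul (c : ℝ) : frob (c • X) = |c| * frob X := by
  simp only [frob, Matrix.smul_apply, smul_eq_mul, mul_pow]
  rw [show ∑ i, ∑ j, c ^ 2 * X i j ^ 2 = c ^ 2 * ∑ i, ∑ j, X i j ^ 2 by
      rw [Finset.mul_sum]; exact Finset.sum_congr rfl fun i _ => by rw [Finset.mul_sum]]
  rw [Real.sqrt_mul (sq_nonneg c), Real.sqrt_sq_eq_abs]

lemma frob_neg : frob (-X) = frob X := by simp [frob]

lemma frob_sub_symm : frob (X - Y) = frob (Y - X) := by
  rw [show X - Y = -(Y - X) by abel, frob_neg]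

lemma frob_eq_zero_iff : frob X = 0 ↔ X = 0 := by
  constructor
  · intro h
    have h2 : ∑ i, ∑ j, X i j ^ 2 = 0 := by
      have := Real.sqrt_eq_zero (by positivity : (0:ℝ) ≤ ∑ i, ∑ j, X i j ^ 2) |>.mp h
      exact this
    ext i j
    have hi := (Finset.sum_eq_zero_iff_of_nonneg (fun i _ => by positivity)).mp h2 i (Finset.mem_univ i)
    have hj := (Finset.sum_eq_zero_iff_of_nonneg (fun j _ => by positivity)).mp hi j (Finset.mem_univ j)
    simpa using pow_eq_zero_iff (n := 2) (by norm_num) |>.mp hj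
  · rintro rfl; exact frob_zero

lemma fip_le_frob_mul_frob : fip X Y ≤ frob X * frob Y := by
  rcases le_or_gt (fip X Y) 0 with h | h
  · exact h.trans (mul_nonneg (frob_nonneg X) (frob_nonneg Y))
  · have key : (fip X Y) ^ 2 ≤ (∑ i, ∑ j, X i j ^ 2) * (∑ i, ∑ j, Y i j ^ 2) := by
      have := Finset.sum_mul_sq_le_sq_mul_sq Finset.univ
        (fun p : Fin d × Fin d => X p.1 p.2) (fun p : Fin d × Fin d => Y p.1 p.2)
      rw [show fip X Y = ∑ p : Fin d × Fin d, X p.1 p.2 * Y p.1 p.2 from (Fintype.sum_prod_type (fun p : Fin d × Fin d => X p.1 p.2 * Y p.1 p.2)).symm,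
        show (∑ i, ∑ j, X i j ^ 2) = ∑ p : Fin d × Fin d, X p.1 p.2 ^ 2 from (Fintype.sum_prod_type (fun p : Fin d × Fin d => X p.1 p.2 ^ 2)).symm,
        show (∑ i, ∑ j, Y i j ^ 2) = ∑ p : Fin d × Fin d, Y p.1 p.2 ^ 2 from (Fintype.sum_prod_type (fun p : Fin d × Fin d => Y p.1 p.2 ^ 2)).symm]
      exact this
    have : fip X Y ≤ Real.sqrt ((∑ i, ∑ j, X i j ^ 2) * (∑ i, ∑ j, Y i j ^ 2)) := by
      rw [show fip X Y = Real.sqrt ((fip X Y)^2) from (Real.sqrt_sq h.le).symm]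
      exact Real.sqrt_le_sqrt key
    rwa [Real.sqrt_mul (by positivity)] at this

lemma abs_fip_le : |fip X Y| ≤ frob X * frob Y := by
  rw [abs_le]
  constructor
  · have := fip_le_frob_mul_frob X (-Y)
    rw [show -Y = (-1 : ℝ) • Y by simp, fip_smul_right, frob_smul] at this
    simp only [abs_neg, abs_one, one_mul, neg_one_mul] at this
    linarith
  · exact fip_le_frob_mul_frob X Y

lemma frob_add_le : frob (X + Y) ≤ frob X + frob Y := by
  have h1 : fip (X+Y) (X+Y) ≤ (frob X + frob Y)^2 := by
    rw [fip_add_left, fip_add_right, fip_add_right]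
    have := fip_le_frob_mul_frob X Y
    have := fip_le_frob_mul_frob Y X
    rw [← frob_sq, ← frob_sq]
    nlinarith [frob_nonneg X, frob_nonneg Y, fip_comm X Y]
  have : frob (X+Y) ^2 ≤ (frob X + frob Y)^2 := by rw [frob_sq]; exact h1
  nlinarith [frob_nonneg (X+Y), frob_nonneg X, frob_nonneg Y]

end basics
section svd
variable {d : ℕ}

lemma bessel (u : Fin d → Fin d → ℝ) (e : Fin d → ℝ)
    (hgram : ∀ i j, ∑ k, u i k * u j k = if i = j then e i else 0)
    (he : ∀ i, e i ≤ 1) (w : Fin d → ℝ) :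
    ∑ i, (∑ k, u i k * w k) ^ 2 ≤ ∑ k, w k ^ 2 := by
  obtain ⟨c, hc⟩ : ∃ c : Fin d → ℝ, ∀ i, c i = ∑ k, u i k * w k :=
    ⟨fun i => ∑ k, u i k * w k, fun i => rfl⟩
  suffices hgoal : ∑ i, c i ^ 2 ≤ ∑ k, w k ^ 2 by
    calc ∑ i, (∑ k, u i k * w k) ^ 2 = ∑ i, c i ^ 2 :=
          Finset.sum_congr rfl fun i _ => by rw [hc]
      _ ≤ _ := hgoal
  have h0 : (0:ℝ) ≤ ∑ k, (w k - ∑ i, c i * u i k) ^ 2 :=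
    Finset.sum_nonneg fun k _ => sq_nonneg _
  have hA : ∑ k, w k * ∑ i, c i * u i k = ∑ i, c i ^ 2 := by
    have : ∀ k, w k * ∑ i, c i * u i k = ∑ i, c i * (u i k * w k) := fun k => by
      rw [Finset.mul_sum]; exact Finset.sum_congr rfl fun i _ => by ring
    rw [Finset.sum_congr rfl fun k _ => this k, Finset.sum_comm]
    exact Finset.sum_congr rfl fun i _ => by rw [← Finset.mul_sum, ← hc]; ring
  have hB : ∑ k, (∑ i, c i * u i k) ^ 2 = ∑ i, c i ^ 2 * e i := by
    have h1 : ∀ k, (∑ i, c i * u i k) ^ 2 = ∑ i, ∑ j, (c i * c j) * (u i k * u j k) := by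
      intro k
      rw [sq, Finset.sum_mul_sum]
      exact Finset.sum_congr rfl fun i _ => Finset.sum_congr rfl fun j _ => by ring
    rw [Finset.sum_congr rfl fun k _ => h1 k, Finset.sum_comm]
    have h2 : ∀ i, ∑ k, ∑ j, (c i * c j) * (u i k * u j k) = c i ^ 2 * e i := by
      intro i
      rw [Finset.sum_comm]
      have h3 : ∀ j, ∑ k, (c i * c j) * (u i k * u j k) = (c i * c j) * ∑ k, u i k * u j k := by
        intro j; rw [Finset.mul_sum]
      rw [Finset.sum_congr rfl fun j _ => h3 j]
      rw [Finset.sum_congr rfl fun j _ => by rw [hgram i j]]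
      simp [Finset.sum_ite_eq, sq, mul_ite]
    exact Finset.sum_congr rfl fun i _ => h2 i
  have hexp : ∑ k, (w k - ∑ i, c i * u i k) ^ 2
      = ∑ k, w k ^ 2 - 2 * (∑ i, c i ^ 2) + ∑ i, c i ^ 2 * e i := by
    have : ∀ k, (w k - ∑ i, c i * u i k) ^ 2
        = w k ^ 2 - 2 * (w k * ∑ i, c i * u i k) + (∑ i, c i * u i k) ^ 2 := fun k => by ring
    rw [Finset.sum_congr rfl fun k _ => this k]
    rw [Finset.sum_add_distrib, Finset.sum_sub_distrib, hB, ← Finset.mul_sum, hA]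
  have hle : ∑ i, c i ^ 2 * e i ≤ ∑ i, c i ^ 2 :=
    Finset.sum_le_sum fun i _ => by
      calc c i ^ 2 * e i ≤ c i ^ 2 * 1 := by
            rcases le_or_gt (e i) 1 with h | h
            · exact mul_le_mul_of_nonneg_left (he i) (sq_nonneg _)
            · exact absurd h (not_lt.mpr (he i))
        _ = c i ^ 2 := mul_one _
  rw [hexp] at h0
  linarith

end svd
section svdproof
open Matrix
variable {d : ℕ}

lemma svd_exists (X : Matrix (Fin d) (Fin d) ℝ) :
    ∃ (u v : Fin d → Fin d → ℝ) (σv : Fin d → ℝ),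
      (∀ i, 0 ≤ σv i) ∧
      (∀ i j, ∑ k, u i k * u j k = if i = j then (if σv i = 0 then 0 else 1) else 0) ∧
      (∀ i j, ∑ k, v i k * v j k = if i = j then (1:ℝ) else 0) ∧
      (∀ p q, X p q = ∑ i, σv i * (u i p * v i q)) ∧
      nucNorm X = ∑ i, σv i ∧
      ((X.rank : ℝ) = ∑ i, if σv i = 0 then (0:ℝ) else 1) := by
  classical
  set h := Matrix.isHermitian_conjTranspose_mul_self X with hh
  set lam : Fin d → ℝ := h.eigenvalues with hlamdef
  have hlam : ∀ i, 0 ≤ lam i := fun i => Matrix.eigenvalues_conjTranspose_mul_self_nonneg X i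
  set v : Fin d → Fin d → ℝ := fun i => ⇑(h.eigenvectorBasis i) with hvdef
  set σv : Fin d → ℝ := fun i => Real.sqrt (lam i) with hsvdef
  set u : Fin d → Fin d → ℝ :=
    fun i => if lam i = 0 then 0 else (σv i)⁻¹ • (X *ᵥ v i) with hudef
  have hsig0 : ∀ i, σv i = 0 ↔ lam i = 0 := fun i => by
    rw [hsvdef]; exact Real.sqrt_eq_zero (hlam i)
  -- eigen equation with transpose
  have heig : ∀ j, (Xᵀ * X) *ᵥ v j = lam j • v j := by
    intro j
    rw [← Matrix.conjTranspose_eq_transpose_of_trivial X]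
    exact h.mulVec_eigenvectorBasis j
  -- orthonormality of v
  have hvv : ∀ i j, ∑ k, v i k * v j k = if i = j then (1:ℝ) else 0 := by
    intro i j
    have ho := h.eigenvectorBasis.orthonormal
    rw [orthonormal_iff_ite] at ho
    have := ho i j
    simp only [PiLp.inner_apply, RCLike.inner_apply, starRingEnd_apply, star_trivial] at this
    rw [← this]
    exact Finset.sum_congr rfl fun k _ => mul_comm _ _
  -- key gram identity for X *ᵥ v i
  have hkey : ∀ i j, ∑ k, (X *ᵥ v i) k * (X *ᵥ v j) k = lam j * (if i = j then 1 else 0) := by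
    intro i j
    have h1 : (X *ᵥ v i) ⬝ᵥ (X *ᵥ v j) = v i ⬝ᵥ ((Xᵀ * X) *ᵥ v j) := by
      conv_rhs => rw [← Matrix.mulVec_mulVec, dotProduct_mulVec, Matrix.vecMul_transpose]
    have h2 : v i ⬝ᵥ ((Xᵀ * X) *ᵥ v j) = lam j * (v i ⬝ᵥ v j) := by
      rw [heig j, dotProduct_smul]; rfl
    have h3 : (v i ⬝ᵥ v j) = if i = j then (1:ℝ) else 0 := hvv i j
    calc ∑ k, (X *ᵥ v i) k * (X *ᵥ v j) k = (X *ᵥ v i) ⬝ᵥ (X *ᵥ v j) := rfl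
      _ = lam j * (if i = j then 1 else 0) := by rw [h1, h2, h3]
  -- lam i = 0 → X *ᵥ v i = 0
  have hXv0 : ∀ i, lam i = 0 → X *ᵥ v i = 0 := by
    intro i hi
    have := hkey i i
    rw [hi, if_pos rfl, zero_mul] at this
    funext k
    have hterm := (Finset.sum_eq_zero_iff_of_nonneg
      (fun k _ => mul_self_nonneg ((X *ᵥ v i) k))).mp this k (Finset.mem_univ k)
    exact mul_self_eq_zero.mp hterm
  -- X *ᵥ v i = σv i • u i
  have hXv : ∀ i, X *ᵥ v i = σv i • u i := by
    intro i
    by_cases hi : lam i = 0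
    · have h0 := hXv0 i hi
      rw [hudef]; simp [hi, h0]
    · have hσ : σv i ≠ 0 := fun hc => hi ((hsig0 i).mp hc)
      rw [hudef]
      simp only [hi, ite_false, if_neg]
      rw [smul_smul, mul_inv_cancel₀ hσ, one_smul]
  -- gram of u
  have huu : ∀ i j, ∑ k, u i k * u j k = if i = j then (if σv i = 0 then 0 else 1) else 0 := by
    intro i j
    by_cases hi : lam i = 0
    · have : u i = 0 := by rw [hudef]; simp [hi]
      simp [this, ((hsig0 i).mpr hi)]
    · by_cases hj : lam j = 0
      · have hij : i ≠ j := fun hc => hi (hc ▸ hj)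
        have : u j = 0 := by rw [hudef]; simp [hj]
        simp [this, hij]
      · have hσi : σv i ≠ 0 := fun hc => hi ((hsig0 i).mp hc)
        have hσj : σv j ≠ 0 := fun hc => hj ((hsig0 j).mp hc)
        have hui : u i = (σv i)⁻¹ • (X *ᵥ v i) := by rw [hudef]; simp [hi]
        have huj : u j = (σv j)⁻¹ • (X *ᵥ v j) := by rw [hudef]; simp [hj]
        have : ∑ k, u i k * u j k = (σv i)⁻¹ * (σv j)⁻¹ * ∑ k, (X *ᵥ v i) k * (X *ᵥ v j) k := by
          rw [Finset.mul_sum, hui, huj]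
          exact Finset.sum_congr rfl fun k _ => by
            simp only [Pi.smul_apply, smul_eq_mul]; ring
        rw [this, hkey i j]
        by_cases hij : i = j
        · subst hij
          simp only [if_pos rfl, if_neg hσi, mul_one]
          have hms : σv i * σv i = lam i := Real.mul_self_sqrt (hlam i)
          rw [← hms]
          field_simp
        · rw [if_neg hij, if_neg hij, mul_zero, mul_zero]
  -- completeness of v
  have hcompl : ∀ k q, ∑ i, v i k * v i q = if k = q then (1:ℝ) else 0 := by
    intro k q
    have hVVt : (Matrix.of v) * (Matrix.of v)ᵀ = 1 := by
      ext i j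
      simp only [Matrix.mul_apply, Matrix.transpose_apply, Matrix.of_apply]
      rw [hvv i j, Matrix.one_apply]
    have hVtV : (Matrix.of v)ᵀ * (Matrix.of v) = 1 := mul_eq_one_comm.mp hVVt
    have := congrFun (congrFun hVtV k) q
    simp only [Matrix.mul_apply, Matrix.transpose_apply, Matrix.of_apply] at this
    rw [show (1 : Matrix (Fin d) (Fin d) ℝ) k q = if k = q then (1:ℝ) else 0 from Matrix.one_apply] at this
    rw [← this]
  -- decomposition
  have hdecomp : ∀ p q, X p q = ∑ i, σv i * (u i p * v i q) := by
    intro p q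
    have h1 : ∀ i, σv i * (u i p * v i q) = (X *ᵥ v i) p * v i q := by
      intro i
      rw [hXv i]
      simp only [Pi.smul_apply, smul_eq_mul]; ring
    rw [Finset.sum_congr rfl fun i _ => h1 i]
    have h2 : ∀ i, (X *ᵥ v i) p * v i q = ∑ k, X p k * (v i k * v i q) := by
      intro i
      rw [show (X *ᵥ v i) p = ∑ k, X p k * v i k from rfl, Finset.sum_mul]
      exact Finset.sum_congr rfl fun k _ => by ring
    rw [Finset.sum_congr rfl fun i _ => h2 i, Finset.sum_comm]
    have h3 : ∀ k, ∑ i, X p k * (v i k * v i q) = X p k * (if k = q then (1:ℝ) else 0) := by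
      intro k
      rw [← Finset.mul_sum, hcompl k q]
    rw [Finset.sum_congr rfl fun k _ => h3 k]
    simp
  -- rank
  have hrank : (X.rank : ℝ) = ∑ i, if σv i = 0 then (0:ℝ) else 1 := by
    have h1 : X.rank = Fintype.card {i // lam i ≠ 0} := by
      rw [← Matrix.rank_conjTranspose_mul_self X]
      exact h.rank_eq_card_non_zero_eigs
    have h2 : Fintype.card {i // lam i ≠ 0} = ∑ i, if lam i ≠ 0 then 1 else 0 := by
      rw [Fintype.card_subtype, Finset.card_filter]
    rw [h1, h2]
    push_cast
    exact Finset.sum_congr rfl fun i _ => by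
      by_cases hi : lam i = 0
      · simp [hi, (hsig0 i).mpr hi]
      · rw [if_neg (fun hc => hi ((hsig0 i).mp hc)), if_pos hi]
  exact ⟨u, v, σv, fun i => Real.sqrt_nonneg _, huu, hvv, hdecomp, rfl, hrank⟩

end svdproof
section dualproof
open Matrix
variable {d : ℕ}

lemma quad_swap (a b : Fin d → ℝ) (f g F G : Fin d → Fin d → ℝ) :
    ∑ p, ∑ q, (∑ i, a i * (f i p * g i q)) * (∑ j, b j * (F j p * G j q))
      = ∑ i, ∑ j, (a i * b j) * ((∑ p, f i p * F j p) * (∑ q, g i q * G j q)) := by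
  have h1 : ∀ p q, (∑ i, a i * (f i p * g i q)) * (∑ j, b j * (F j p * G j q))
      = ∑ i, ∑ j, (a i * b j) * ((f i p * F j p) * (g i q * G j q)) := by
    intro p q
    rw [Finset.sum_mul_sum]
    exact Finset.sum_congr rfl fun i _ => Finset.sum_congr rfl fun j _ => by ring
  calc ∑ p, ∑ q, (∑ i, a i * (f i p * g i q)) * (∑ j, b j * (F j p * G j q))
      = ∑ p, ∑ q, ∑ i, ∑ j, (a i * b j) * ((f i p * F j p) * (g i q * G j q)) :=
        Finset.sum_congr rfl fun p _ => Finset.sum_congr rfl fun q _ => h1 p q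
    _ = ∑ p, ∑ i, ∑ q, ∑ j, (a i * b j) * ((f i p * F j p) * (g i q * G j q)) :=
        Finset.sum_congr rfl fun p _ => Finset.sum_comm
    _ = ∑ i, ∑ p, ∑ q, ∑ j, (a i * b j) * ((f i p * F j p) * (g i q * G j q)) :=
        Finset.sum_comm
    _ = ∑ i, ∑ p, ∑ j, ∑ q, (a i * b j) * ((f i p * F j p) * (g i q * G j q)) :=
        Finset.sum_congr rfl fun i _ => Finset.sum_congr rfl fun p _ => Finset.sum_comm
    _ = ∑ i, ∑ j, ∑ p, ∑ q, (a i * b j) * ((f i p * F j p) * (g i q * G j q)) :=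
        Finset.sum_congr rfl fun i _ => Finset.sum_comm
    _ = ∑ i, ∑ j, (a i * b j) * ((∑ p, f i p * F j p) * (∑ q, g i q * G j q)) := by
        refine Finset.sum_congr rfl fun i _ => Finset.sum_congr rfl fun j _ => ?_
        calc ∑ p, ∑ q, (a i * b j) * ((f i p * F j p) * (g i q * G j q))
            = ∑ p, ((a i * b j) * (f i p * F j p)) * ∑ q, g i q * G j q :=
              Finset.sum_congr rfl fun p _ => by
                rw [Finset.mul_sum]
                exact Finset.sum_congr rfl fun q _ => by ring
          _ = (∑ p, (a i * b j) * (f i p * F j p)) * ∑ q, g i q * G j q :=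
              (Finset.sum_mul _ _ _).symm
          _ = (a i * b j) * ((∑ p, f i p * F j p) * (∑ q, g i q * G j q)) := by
              rw [← Finset.mul_sum]; ring

lemma nuc_dual (X : Matrix (Fin d) (Fin d) ℝ) :
    ∃ W : Matrix (Fin d) (Fin d) ℝ,
      fip W X = nucNorm X ∧ (∀ Y, fip W Y ≤ nucNorm Y) ∧ frob W ^ 2 = (X.rank : ℝ) := by
  classical
  obtain ⟨u, v, σ, hσ0, huu, hvv, hdec, hnuc, hrank⟩ := svd_exists X
  obtain ⟨e, he_def⟩ : ∃ e : Fin d → ℝ, e = fun i => if σ i = 0 then (0:ℝ) else 1 := ⟨_, rfl⟩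
  have he1 : ∀ i, e i ≤ 1 := fun i => by rw [he_def]; dsimp only; split <;> norm_num
  have he0 : ∀ i, 0 ≤ e i := fun i => by rw [he_def]; dsimp only; split <;> norm_num
  have huu' : ∀ i j, ∑ k, u i k * u j k = if i = j then e i else 0 := by
    intro i j; rw [he_def]; exact huu i j
  have hvv' : ∀ i j, ∑ k, v i k * v j k = if i = j then (1:ℝ) else 0 := hvv
  set W : Matrix (Fin d) (Fin d) ℝ := Matrix.of fun p q => ∑ i, (1:ℝ) * (u i p * v i q) with hW
  -- general expansion of fip W against an svd-expanded matrix
  have hexp : ∀ (b : Fin d → ℝ) (F G : Fin d → Fin d → ℝ),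
      fip W (Matrix.of fun p q => ∑ j, b j * (F j p * G j q))
        = ∑ i, ∑ j, ((1:ℝ) * b j) * ((∑ p, u i p * F j p) * (∑ q, v i q * G j q)) := by
    intro b F G
    exact quad_swap (fun _ => (1:ℝ)) b u v F G
  have hXeq : X = Matrix.of fun p q => ∑ i, σ i * (u i p * v i q) := by
    ext p q; exact hdec p q
  refine ⟨W, ?_, ?_, ?_⟩
  · -- fip W X = nucNorm X
    conv_lhs => rw [hXeq]
    rw [hexp σ u v]
    have hcol : ∀ i, ∑ j, ((1:ℝ) * σ j) * ((∑ p, u i p * u j p) * (∑ q, v i q * v j q))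
        = σ i * e i := by
      intro i
      rw [Finset.sum_eq_single i]
      · rw [huu' i i, hvv' i i, if_pos rfl, if_pos rfl]; ring
      · intro j _ hj
        rw [huu' i j, hvv' i j, if_neg (fun hc => hj hc.symm), if_neg (fun hc => hj hc.symm)]
        ring
      · intro habs; exact absurd (Finset.mem_univ i) habs
    rw [Finset.sum_congr rfl fun i _ => hcol i, hnuc]
    refine Finset.sum_congr rfl fun i _ => ?_
    rw [he_def]; dsimp only
    by_cases hi : σ i = 0
    · rw [if_pos hi, hi, mul_zero]
    · rw [if_neg hi, mul_one]
  · -- fip W Y ≤ nucNorm Y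
    intro Y
    obtain ⟨ub, vb, τ, hτ0, hbb, hvvb, hdecY, hnucY, _⟩ := svd_exists Y
    have hYeq : Y = Matrix.of fun p q => ∑ j, τ j * (ub j p * vb j q) := by
      ext p q; exact hdecY p q
    conv_lhs => rw [hYeq]
    rw [hexp τ ub vb, Finset.sum_comm, hnucY]
    refine Finset.sum_le_sum fun j _ => ?_
    have hstep : ∑ i, ((1:ℝ) * τ j) * ((∑ p, u i p * ub j p) * (∑ q, v i q * vb j q))
        = τ j * ∑ i, (∑ p, u i p * ub j p) * (∑ q, v i q * vb j q) := by
      rw [Finset.mul_sum]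
      exact Finset.sum_congr rfl fun i _ => by ring
    rw [hstep]
    have hc1 : ∑ i, (∑ p, u i p * ub j p) * (∑ q, v i q * vb j q) ≤ 1 := by
      have hP : ∑ i, (∑ p, u i p * ub j p) ^ 2 ≤ 1 := by
        calc ∑ i, (∑ p, u i p * ub j p) ^ 2 ≤ ∑ k, ub j k ^ 2 := bessel u e huu' he1 (ub j)
          _ = ∑ k, ub j k * ub j k := Finset.sum_congr rfl fun k _ => sq (ub j k) ▸ by ring
          _ = if τ j = 0 then 0 else 1 := by rw [hbb j j, if_pos rfl]
          _ ≤ 1 := by split <;> norm_num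
      have hQ : ∑ i, (∑ q, v i q * vb j q) ^ 2 ≤ 1 := by
        calc ∑ i, (∑ q, v i q * vb j q) ^ 2
            ≤ ∑ k, vb j k ^ 2 := bessel v (fun _ => 1) hvv' (fun _ => le_refl 1) (vb j)
          _ = ∑ k, vb j k * vb j k := Finset.sum_congr rfl fun k _ => by ring
          _ = 1 := by rw [hvvb j j, if_pos rfl]
      have hcs := Finset.sum_mul_sq_le_sq_mul_sq Finset.univ
        (fun i => ∑ p, u i p * ub j p) (fun i => ∑ q, v i q * vb j q)
      have hsq : (∑ i, (∑ p, u i p * ub j p) * (∑ q, v i q * vb j q)) ^ 2 ≤ 1 := by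
        calc (∑ i, (∑ p, u i p * ub j p) * (∑ q, v i q * vb j q)) ^ 2
            ≤ (∑ i, (∑ p, u i p * ub j p) ^ 2) * ∑ i, (∑ q, v i q * vb j q) ^ 2 := hcs
          _ ≤ 1 * 1 := by
              apply mul_le_mul hP hQ (Finset.sum_nonneg fun i _ => sq_nonneg _) zero_le_one
          _ = 1 := one_mul 1
      nlinarith [sq_nonneg ((∑ i, (∑ p, u i p * ub j p) * (∑ q, v i q * vb j q)) - 1)]
    calc τ j * ∑ i, (∑ p, u i p * ub j p) * (∑ q, v i q * vb j q) ≤ τ j * 1 :=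
          mul_le_mul_of_nonneg_left hc1 (hτ0 j)
      _ = τ j := mul_one _
  · -- frob W ^ 2 = rank
    rw [frob_sq, show (W : Matrix (Fin d) (Fin d) ℝ) = Matrix.of fun p q => ∑ i, (1:ℝ) * (u i p * v i q) from rfl]
    rw [hexp (fun _ => (1:ℝ)) u v]
    have hcol : ∀ i, ∑ j, ((1:ℝ) * (1:ℝ)) * ((∑ p, u i p * u j p) * (∑ q, v i q * v j q))
        = e i := by
      intro i
      rw [Finset.sum_eq_single i]
      · rw [huu' i i, hvv' i i, if_pos rfl, if_pos rfl]; ring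
      · intro j _ hj
        rw [huu' i j, hvv' i j, if_neg (fun hc => hj hc.symm), if_neg (fun hc => hj hc.symm)]
        ring
      · intro habs; exact absurd (Finset.mem_univ i) habs
    rw [Finset.sum_congr rfl fun i _ => hcol i, hrank, he_def]

end dualproof
section opsproof
open Matrix
variable {d m : ℕ}

lemma fip_zero_left (Y : Matrix (Fin d) (Fin d) ℝ) : fip 0 Y = 0 := by simp [fip]

lemma fip_neg_right (X Y : Matrix (Fin d) (Fin d) ℝ) : fip X (-Y) = -fip X Y := by
  simp [fip, Finset.sum_neg_distrib]

lemma frob_sub_le (X Y : Matrix (Fin d) (Fin d) ℝ) : frob (X - Y) ≤ frob X + frob Y := by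
  have := frob_add_le X (-Y)
  rw [frob_neg] at this
  simpa [sub_eq_add_neg] using this

lemma frob_sum_le {ι : Type*} (s : Finset ι) (M : ι → Matrix (Fin d) (Fin d) ℝ) :
    frob (∑ i ∈ s, M i) ≤ ∑ i ∈ s, frob (M i) := by
  classical
  induction s using Finset.induction_on with
  | empty => simp [frob_zero]
  | insert a s' hx ih =>
      rw [Finset.sum_insert hx, Finset.sum_insert hx]
      exact (frob_add_le _ _).trans (by linarith)

lemma opA_sub (A : Fin m → Matrix (Fin d) (Fin d) ℝ) (X Y : Matrix (Fin d) (Fin d) ℝ) :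
    opA A (X - Y) = opA A X - opA A Y := by
  funext i; simp [opA, fip_sub_right]

lemma opA_smul (A : Fin m → Matrix (Fin d) (Fin d) ℝ) (c : ℝ) (X : Matrix (Fin d) (Fin d) ℝ) :
    opA A (c • X) = c • opA A X := by
  funext i; simp [opA, fip_smul_right]

lemma opA_zero (A : Fin m → Matrix (Fin d) (Fin d) ℝ) : opA A 0 = 0 := by
  funext i; simp [opA, fip_zero_right]

lemma opAT_sub (A : Fin m → Matrix (Fin d) (Fin d) ℝ) (y z : Fin m → ℝ) :
    opAT A (y - z) = opAT A y - opAT A z := by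
  simp [opAT, sub_smul, Finset.sum_sub_distrib]

lemma opAT_smul (A : Fin m → Matrix (Fin d) (Fin d) ℝ) (c : ℝ) (y : Fin m → ℝ) :
    opAT A (c • y) = c • opAT A y := by
  simp [opAT, Finset.smul_sum, smul_smul]

lemma opAT_zero (A : Fin m → Matrix (Fin d) (Fin d) ℝ) : opAT A 0 = 0 := by
  simp [opAT]

lemma frob_opAT_le (A : Fin m → Matrix (Fin d) (Fin d) ℝ) (y : Fin m → ℝ) :
    frob (opAT A y) ≤ ∑ i, |y i| * frob (A i) := by
  calc frob (opAT A y) ≤ ∑ i, frob (y i • A i) := frob_sum_le _ _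
    _ = ∑ i, |y i| * frob (A i) := Finset.sum_congr rfl fun i _ => frob_smul _ _

lemma l2norm_nonneg (x : Fin m → ℝ) : 0 ≤ l2norm x := Real.sqrt_nonneg _

lemma l2norm_eq_zero_iff (x : Fin m → ℝ) : l2norm x = 0 ↔ x = 0 := by
  constructor
  · intro h
    have h2 : ∑ i, x i ^ 2 = 0 :=
      (Real.sqrt_eq_zero (by positivity : (0:ℝ) ≤ ∑ i, x i ^ 2)).mp h
    funext i
    have hi := (Finset.sum_eq_zero_iff_of_nonneg (fun i _ => by positivity)).mp h2 i
      (Finset.mem_univ i)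
    simpa using pow_eq_zero_iff (n := 2) (by norm_num) |>.mp hi
  · rintro rfl; simp [l2norm]

-- rank lemmas
lemma rank_add_le' (A B : Matrix (Fin d) (Fin d) ℝ) : (A + B).rank ≤ A.rank + B.rank := by
  rw [Matrix.rank, Matrix.rank, Matrix.rank]
  have hsub : LinearMap.range (A + B).mulVecLin ≤
      LinearMap.range A.mulVecLin ⊔ LinearMap.range B.mulVecLin := by
    rintro x ⟨y, rfl⟩
    rw [Matrix.mulVecLin_add]
    exact Submodule.add_mem_sup (LinearMap.mem_range_self _ y) (LinearMap.mem_range_self _ y)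
  calc Module.finrank ℝ (LinearMap.range (A + B).mulVecLin)
      ≤ Module.finrank ℝ (LinearMap.range A.mulVecLin ⊔ LinearMap.range B.mulVecLin : Submodule ℝ _) :=
        Submodule.finrank_mono hsub
    _ ≤ _ := Submodule.finrank_add_le_finrank_add_finrank _ _

lemma rank_smul_eq (c : ℝ) (hc : c ≠ 0) (A : Matrix (Fin d) (Fin d) ℝ) :
    (c • A).rank = A.rank := by
  have h1 : c • A = (c • (1 : Matrix (Fin d) (Fin d) ℝ)) * A := by
    rw [smul_mul_assoc, one_mul]
  rw [h1]
  apply Matrix.rank_mul_eq_right_of_isUnit_det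
  rw [Matrix.det_smul, Matrix.det_one, mul_one]
  exact (pow_ne_zero _ hc).isUnit

lemma rank_neg_eq (A : Matrix (Fin d) (Fin d) ℝ) : (-A).rank = A.rank := by
  have : -A = (-1 : ℝ) • A := by simp
  rw [this, rank_smul_eq _ (by norm_num)]

lemma rank_sub_le (A B : Matrix (Fin d) (Fin d) ℝ) : (A - B).rank ≤ A.rank + B.rank := by
  rw [sub_eq_add_neg]
  calc (A + -B).rank ≤ A.rank + (-B).rank := rank_add_le' _ _
    _ = A.rank + B.rank := by rw [rank_neg_eq]

end opsproof
section supproof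
open Matrix
variable {d m : ℕ}

lemma nucNorm_convex (A B : Matrix (Fin d) (Fin d) ℝ) (t : ℝ) (h0 : 0 ≤ t) (h1 : t ≤ 1) :
    nucNorm (A + t • (B - A)) ≤ (1 - t) * nucNorm A + t * nucNorm B := by
  obtain ⟨W, hWeq, hWle, _⟩ := nuc_dual (A + t • (B - A))
  have hsplit : fip W (A + t • (B - A)) = (1 - t) * fip W A + t * fip W B := by
    rw [fip_add_right, fip_smul_right, fip_sub_right]; ring
  rw [← hWeq, hsplit]
  exact add_le_add (mul_le_mul_of_nonneg_left (hWle A) (by linarith))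
    (mul_le_mul_of_nonneg_left (hWle B) h0)

lemma nucNorm_diff_le (X Z : Matrix (Fin d) (Fin d) ℝ) :
    nucNorm X - nucNorm Z ≤ Real.sqrt (X.rank) * frob (X - Z) := by
  obtain ⟨W, hWeq, hWle, hWfro⟩ := nuc_dual X
  have h1 : nucNorm X - nucNorm Z ≤ fip W X - fip W Z := by
    have := hWle Z; linarith [hWeq.ge]
  have h2 : fip W X - fip W Z = fip W (X - Z) := (fip_sub_right _ _ _).symm
  have h3 : fip W (X - Z) ≤ frob W * frob (X - Z) := fip_le_frob_mul_frob _ _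
  have h4 : frob W = Real.sqrt (X.rank) := by
    rw [← Real.sqrt_sq (frob_nonneg W), hWfro]
  rw [h4] at h3
  linarith

-- scaling matrices to the sphere
lemma unit_mem (r : ℕ) (E : Matrix (Fin d) (Fin d) ℝ) (hE : E ≠ 0) (hr : E.rank ≤ r) :
    (frob E)⁻¹ • E ∈ lowRank d r ∩ frobSphere d := by
  have hfE : 0 < frob E := lt_of_le_of_ne (frob_nonneg E)
    (fun hc => hE ((frob_eq_zero_iff E).mp hc.symm))
  constructor
  · show ((frob E)⁻¹ • E).rank ≤ r
    rw [rank_smul_eq _ (inv_ne_zero hfE.ne')]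
    exact hr
  · show frob ((frob E)⁻¹ • E) = 1
    rw [frob_smul, abs_of_pos (inv_pos.mpr hfE), inv_mul_cancel₀ hfE.ne']

lemma sphere_nonempty (hd : 0 < d) (r : ℕ) (hr : 1 ≤ r) :
    (lowRank d r ∩ frobSphere d).Nonempty := by
  classical
  set i0 : Fin d := ⟨0, hd⟩
  refine ⟨Matrix.diagonal (fun k => if k = i0 then (1:ℝ) else 0), ?_, ?_⟩
  · show (Matrix.diagonal _).rank ≤ r
    rw [Matrix.rank_diagonal]
    have : Fintype.card {i // (if i = i0 then (1:ℝ) else 0) ≠ 0} = 1 := by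
      rw [Fintype.card_subtype]
      rw [show (Finset.univ.filter fun i => (if i = i0 then (1:ℝ) else 0) ≠ 0)
          = Finset.univ.filter fun i => i = i0 from Finset.filter_congr fun i _ => by
        by_cases hi : i = i0 <;> simp [hi]]
      simp [Finset.filter_eq']
    rw [this]; exact hr
  · show frob (Matrix.diagonal _) = 1
    rw [frob]
    rw [show ∑ p, ∑ q, (Matrix.diagonal (fun k => if k = i0 then (1:ℝ) else 0)) p q ^ 2
        = (1:ℝ) by
      simp [Matrix.diagonal_apply, apply_ite (· ^ (2:ℕ)), Finset.sum_ite_eq, Finset.sum_ite_eq']]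
    exact Real.sqrt_one

-- bddAbove for rho sets
lemma rho_bddAbove (A : Fin m → Matrix (Fin d) (Fin d) ℝ) (μ : ℝ)
    (P Q : Set (Matrix (Fin d) (Fin d) ℝ))
    (hP : ∀ V ∈ P, frob V = 1) (hQ : ∀ U ∈ Q, frob U = 1) :
    BddAbove {t | ∃ V ∈ P, ∃ U ∈ Q, t = fip V (U - μ • opAT A (opA A U))} := by
  refine ⟨1 + |μ| * ∑ i, frob (A i) * frob (A i), ?_⟩
  rintro t ⟨V, hV, U, hU, rfl⟩
  have hfV := hP V hV
  have hfU := hQ U hU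
  have h1 : fip V (U - μ • opAT A (opA A U)) ≤ frob V * frob (U - μ • opAT A (opA A U)) :=
    fip_le_frob_mul_frob _ _
  have h2 : frob (U - μ • opAT A (opA A U)) ≤ frob U + |μ| * frob (opAT A (opA A U)) := by
    calc frob (U - μ • opAT A (opA A U)) ≤ frob U + frob (μ • opAT A (opA A U)) :=
          frob_sub_le _ _
      _ = frob U + |μ| * frob (opAT A (opA A U)) := by rw [frob_smul]
  have h3 : frob (opAT A (opA A U)) ≤ ∑ i, frob (A i) * frob (A i) := by
    calc frob (opAT A (opA A U)) ≤ ∑ i, |opA A U i| * frob (A i) := frob_opAT_le _ _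
      _ ≤ ∑ i, frob (A i) * frob (A i) := Finset.sum_le_sum fun i _ => by
          have := abs_fip_le (A i) U
          rw [hfU, mul_one] at this
          exact mul_le_mul_of_nonneg_right this (frob_nonneg _)
  calc fip V (U - μ • opAT A (opA A U)) ≤ frob V * frob (U - μ • opAT A (opA A U)) := h1
    _ = frob (U - μ • opAT A (opA A U)) := by rw [hfV, one_mul]
    _ ≤ 1 + |μ| * frob (opAT A (opA A U)) := by linarith
    _ ≤ 1 + |μ| * ∑ i, frob (A i) * frob (A i) := by
        have := mul_le_mul_of_nonneg_left h3 (abs_nonneg μ)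
        linarith

lemma xi_bddAbove (M0 : Matrix (Fin d) (Fin d) ℝ) (P : Set (Matrix (Fin d) (Fin d) ℝ))
    (hP : ∀ V ∈ P, frob V = 1) :
    BddAbove {t | ∃ V ∈ P, t = fip V M0} := by
  refine ⟨frob M0, ?_⟩
  rintro t ⟨V, hV, rfl⟩
  have := fip_le_frob_mul_frob V M0
  rw [hP V hV, one_mul] at this
  exact this

lemma symm_closed (r : ℕ) : ∀ V ∈ lowRank d r ∩ frobSphere d,
    -V ∈ lowRank d r ∩ frobSphere d := by
  rintro V ⟨hV1, hV2⟩
  constructor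
  · show (-V).rank ≤ r
    rw [rank_neg_eq]; exact hV1
  · show frob (-V) = 1
    rw [frob_neg]; exact hV2

lemma sSup_nonneg_symm (S : Set ℝ) (hB : BddAbove S) (hne : S.Nonempty)
    (hsym : ∀ t ∈ S, -t ∈ S) : 0 ≤ sSup S := by
  obtain ⟨t, ht⟩ := hne
  have h1 := le_csSup hB ht
  have h2 := le_csSup hB (hsym t ht)
  linarith

end supproof
section mainpre
variable {d : ℕ}

lemma frob_add_smul_sq (M N : Matrix (Fin d) (Fin d) ℝ) (t : ℝ) :
    frob (M + t • N) ^ 2 = frob M ^ 2 + 2 * t * fip M N + t ^ 2 * frob N ^ 2 := by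
  rw [frob_sq, frob_sq, frob_sq]
  simp only [fip_add_left, fip_add_right, fip_smul_left, fip_smul_right, fip_comm N M]
  ring

lemma small_param (a b : ℝ) (hb : 0 ≤ b)
    (h : ∀ t : ℝ, 0 < t → t ≤ 1 → 0 ≤ t * a + t ^ 2 * b) : 0 ≤ a := by
  by_contra hcon
  push_neg at hcon
  have h2b : (0:ℝ) < 2 * b + 1 := by linarith
  set t := min 1 (-a / (2 * b + 1)) with ht_def
  have ht0 : 0 < t := lt_min one_pos (div_pos (neg_pos.mpr hcon) h2b)
  have ht1 : t ≤ 1 := min_le_left _ _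
  have htle : t ≤ -a / (2 * b + 1) := min_le_right _ _
  have hmul : t * (2 * b + 1) ≤ -a := by
    calc t * (2 * b + 1) ≤ (-a / (2 * b + 1)) * (2 * b + 1) :=
          mul_le_mul_of_nonneg_right htle h2b.le
      _ = -a := div_mul_cancel₀ (-a) h2b.ne'
  have hh := h t ht0 ht1
  nlinarith [mul_le_mul_of_nonneg_left hmul ht0.le, mul_pos ht0 ht0,
    mul_neg_of_pos_of_neg ht0 hcon]

end mainpre

/-- One-step deterministic contraction, low-rank case.
If `rank(X_t) < 2r`, `rank(X_{t+1}) < 2r`, `‖X_t - X⋆‖_F ≤ Δ_t`, and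
`λ_t = (ξ_r δ + ρ_{r,3r} Δ_t/μ)/√r`, then
`‖X_{t+1} - X⋆‖_F ≤ 2 ρ_{3r,3r} Δ_t + 2 ξ_{3r} μ δ`. -/
theorem stmt5 {m d : ℕ} (A : Fin m → Matrix (Fin d) (Fin d) ℝ) (w : Fin m → ℝ) (δ : ℝ)
    (Xstar : Matrix (Fin d) (Fin d) ℝ) (r : ℕ) (μ Δt lamt : ℝ)
    (Xt Xnext : Matrix (Fin d) (Fin d) ℝ)
    (y : Fin m → ℝ) (hy : y = opA A Xstar + w)
    (hXs : Xstar.rank ≤ r) (hw : l2norm w ≤ δ) (hμ : 0 < μ)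
    (hrankt : Xt.rank < 2 * r)
    (hrankt1 : Xnext.rank < 2 * r)
    (hΔ : frob (Xt - Xstar) ≤ Δt)
    (hlam : lamt = (rsXiM A w (lowRank d r ∩ frobSphere d) * δ +
        rsRhoM A μ (lowRank d r ∩ frobSphere d) (lowRank d (3 * r) ∩ frobSphere d) * Δt / μ)
        / Real.sqrt r)
    (hmin : ∀ Z : Matrix (Fin d) (Fin d) ℝ,
        lamt * μ * nucNorm Xnext + (1 / 2) * frob (Xnext - (Xt - μ • opAT A (opA A Xt - y))) ^ 2 ≤
        lamt * μ * nucNorm Z + (1 / 2) * frob (Z - (Xt - μ • opAT A (opA A Xt - y))) ^ 2) :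
    frob (Xnext - Xstar) ≤
      2 * rsRhoM A μ (lowRank d (3 * r) ∩ frobSphere d) (lowRank d (3 * r) ∩ frobSphere d) * Δt +
      2 * rsXiM A w (lowRank d (3 * r) ∩ frobSphere d) * μ * δ := by
  classical
  -- degenerate case r = 0
  rcases Nat.eq_zero_or_pos r with hr0 | hrpos
  · subst hr0; simp at hrankt
  -- degenerate case d = 0
  rcases Nat.eq_zero_or_pos d with hd0 | hdpos
  · subst hd0
    have hfr : frob (Xnext - Xstar) = 0 := by rw [frob]; simp
    have hempty : (lowRank 0 (3 * r) ∩ frobSphere 0) = ∅ := by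
      ext V
      simp only [Set.mem_inter_iff, Set.mem_empty_iff_false, iff_false, not_and]
      intro _
      intro hV2
      have h0 : frob V = 0 := by rw [frob]; simp
      rw [show frob V = 1 from hV2] at h0
      norm_num at h0
    have hρ : rsRhoM A μ (lowRank 0 (3 * r) ∩ frobSphere 0)
        (lowRank 0 (3 * r) ∩ frobSphere 0) = 0 := by
      rw [rsRhoM, show {t | ∃ V ∈ lowRank 0 (3 * r) ∩ frobSphere 0,
          ∃ U ∈ lowRank 0 (3 * r) ∩ frobSphere 0,
          t = fip V (U - μ • opAT A (opA A U))} = (∅ : Set ℝ) by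
        rw [hempty]; simp]
      exact Real.sSup_empty
    have hξ : rsXiM A w (lowRank 0 (3 * r) ∩ frobSphere 0) = 0 := by
      rw [rsXiM, show {t | ∃ V ∈ lowRank 0 (3 * r) ∩ frobSphere 0,
          t = fip V (opAT A ((l2norm w)⁻¹ • w))} = (∅ : Set ℝ) by
        rw [hempty]; simp]
      exact Real.sSup_empty
    rw [hfr, hρ, hξ]
    norm_num
  -- main case
  have hδ0 : 0 ≤ δ := (l2norm_nonneg w).trans hw
  have hΔ0 : 0 ≤ Δt := (frob_nonneg _).trans hΔ
  set P1 := lowRank d r ∩ frobSphere d with hP1def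
  set P3 := lowRank d (3 * r) ∩ frobSphere d with hP3def
  set ξ1 := rsXiM A w P1 with hξ1def
  set ξ3 := rsXiM A w P3 with hξ3def
  set ρ13 := rsRhoM A μ P1 P3 with hρ13def
  set ρ33 := rsRhoM A μ P3 P3 with hρ33def
  have hP1s : ∀ V ∈ P1, frob V = 1 := fun V hV => hV.2
  have hP3s : ∀ V ∈ P3, frob V = 1 := fun V hV => hV.2
  have hP1ne : P1.Nonempty := sphere_nonempty hdpos r hrpos
  have hP3ne : P3.Nonempty := sphere_nonempty hdpos (3 * r) (by omega)
  have hP13 : P1 ⊆ P3 := by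
    rintro V ⟨hV1, hV2⟩
    have hr3 : V.rank ≤ 3 * r := le_trans hV1 (by omega)
    exact ⟨hr3, hV2⟩
  -- the four target sets
  set Sρ33 := {t | ∃ V ∈ P3, ∃ U ∈ P3, t = fip V (U - μ • opAT A (opA A U))} with hSρ33def
  set Sρ13 := {t | ∃ V ∈ P1, ∃ U ∈ P3, t = fip V (U - μ • opAT A (opA A U))} with hSρ13def
  set Sξ3 := {t | ∃ V ∈ P3, t = fip V (opAT A ((l2norm w)⁻¹ • w))} with hSξ3def
  set Sξ1 := {t | ∃ V ∈ P1, t = fip V (opAT A ((l2norm w)⁻¹ • w))} with hSξ1def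
  have hBρ33 : BddAbove Sρ33 := rho_bddAbove A μ P3 P3 hP3s hP3s
  have hBρ13 : BddAbove Sρ13 := rho_bddAbove A μ P1 P3 hP1s hP3s
  have hBξ3 : BddAbove Sξ3 := xi_bddAbove _ P3 hP3s
  have hBξ1 : BddAbove Sξ1 := xi_bddAbove _ P1 hP1s
  obtain ⟨V1, hV1⟩ := hP1ne
  obtain ⟨V3, hV3⟩ := hP3ne
  have hneρ33 : Sρ33.Nonempty := ⟨_, V3, hV3, V3, hV3, rfl⟩
  have hneρ13 : Sρ13.Nonempty := ⟨_, V1, hV1, V3, hV3, rfl⟩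
  have hneξ3 : Sξ3.Nonempty := ⟨_, V3, hV3, rfl⟩
  have hneξ1 : Sξ1.Nonempty := ⟨_, V1, hV1, rfl⟩
  have hsymρ33 : ∀ t ∈ Sρ33, -t ∈ Sρ33 := by
    rintro t ⟨V, hV, U, hU, rfl⟩
    exact ⟨-V, symm_closed _ V hV, U, hU, by rw [fip_neg_left]⟩
  have hsymρ13 : ∀ t ∈ Sρ13, -t ∈ Sρ13 := by
    rintro t ⟨V, hV, U, hU, rfl⟩
    exact ⟨-V, symm_closed _ V hV, U, hU, by rw [fip_neg_left]⟩
  have hsymξ3 : ∀ t ∈ Sξ3, -t ∈ Sξ3 := by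
    rintro t ⟨V, hV, rfl⟩
    exact ⟨-V, symm_closed _ V hV, by rw [fip_neg_left]⟩
  have hsymξ1 : ∀ t ∈ Sξ1, -t ∈ Sξ1 := by
    rintro t ⟨V, hV, rfl⟩
    exact ⟨-V, symm_closed _ V hV, by rw [fip_neg_left]⟩
  have hρ33_0 : 0 ≤ ρ33 := sSup_nonneg_symm _ hBρ33 hneρ33 hsymρ33
  have hρ13_0 : 0 ≤ ρ13 := sSup_nonneg_symm _ hBρ13 hneρ13 hsymρ13
  have hξ3_0 : 0 ≤ ξ3 := sSup_nonneg_symm _ hBξ3 hneξ3 hsymξ3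
  have hξ1_0 : 0 ≤ ξ1 := sSup_nonneg_symm _ hBξ1 hneξ1 hsymξ1
  have hρmono : ρ13 ≤ ρ33 := by
    apply csSup_le_csSup hBρ33 hneρ13
    rintro t ⟨V, hV, U, hU, rfl⟩
    exact ⟨V, hP13 hV, U, hU, rfl⟩
  have hξmono : ξ1 ≤ ξ3 := by
    apply csSup_le_csSup hBξ3 hneξ1
    rintro t ⟨V, hV, rfl⟩
    exact ⟨V, hP13 hV, rfl⟩
  have hlam0 : 0 ≤ lamt := by
    rw [hlam]
    apply div_nonneg _ (Real.sqrt_nonneg _)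
    have h1 : 0 ≤ ξ1 * δ := mul_nonneg hξ1_0 hδ0
    have h2 : 0 ≤ ρ13 * Δt / μ := div_nonneg (mul_nonneg hρ13_0 hΔ0) hμ.le
    linarith
  have hΦ0 : 0 ≤ lamt * μ := mul_nonneg hlam0 hμ.le
  -- early exit if Xnext = Xstar
  rcases eq_or_ne (Xnext - Xstar) 0 with hE0 | hE0
  · rw [hE0, frob_zero]
    have h1 := mul_nonneg hρ33_0 hΔ0
    have h2 := mul_nonneg (mul_nonneg hξ3_0 hμ.le) hδ0
    linarith
  set E := Xnext - Xstar with hEdef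
  set D := Xt - Xstar with hDdef
  have hfE : 0 < frob E := lt_of_le_of_ne (frob_nonneg E)
    (fun hc => hE0 ((frob_eq_zero_iff E).mp hc.symm))
  have hrE : E.rank ≤ 3 * r := by
    rw [hEdef]
    have := rank_sub_le Xnext Xstar
    omega
  have hrD : D.rank ≤ 3 * r := by
    rw [hDdef]
    have := rank_sub_le Xt Xstar
    omega
  have hEmem : (frob E)⁻¹ • E ∈ P3 := unit_mem (3 * r) E hE0 hrE
  set G := Xt - μ • opAT A (opA A Xt - y) with hGdef
  -- variational inequality
  have hvar0 : 0 ≤ lamt * μ * (nucNorm Xstar - nucNorm Xnext)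
      + fip (Xnext - G) (Xstar - Xnext) := by
    apply small_param _ ((1 / 2) * frob (Xstar - Xnext) ^ 2) (by positivity)
    intro t ht0 ht1
    have h := hmin (Xnext + t • (Xstar - Xnext))
    rw [add_sub_right_comm, frob_add_smul_sq] at h
    have hconv := nucNorm_convex Xnext Xstar t ht0.le ht1
    have hΦ := mul_le_mul_of_nonneg_left hconv hΦ0
    linarith [h, hΦ]
  have hvar : fip E (Xnext - G) ≤ lamt * μ * (nucNorm Xstar - nucNorm Xnext) := by
    have hflip : fip (Xnext - G) (Xstar - Xnext) = - fip E (Xnext - G) := by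
      rw [show Xstar - Xnext = -E by rw [hEdef]; abel, fip_neg_right, fip_comm]
    rw [hflip] at hvar0
    linarith
  -- nuclear norm difference bound
  have hnucdiff : nucNorm Xstar - nucNorm Xnext ≤ Real.sqrt r * frob E := by
    have h1 := nucNorm_diff_le Xstar Xnext
    have h2 : Real.sqrt (Xstar.rank : ℝ) ≤ Real.sqrt r :=
      Real.sqrt_le_sqrt (by exact_mod_cast hXs)
    have h3 : frob (Xstar - Xnext) = frob E := by
      rw [hEdef, frob_sub_symm]
    rw [h3] at h1
    calc nucNorm Xstar - nucNorm Xnext ≤ Real.sqrt (Xstar.rank : ℝ) * frob E := h1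
      _ ≤ Real.sqrt r * frob E := mul_le_mul_of_nonneg_right h2 (frob_nonneg E)
  -- lambda identity
  have hsqr : (0:ℝ) < Real.sqrt r := Real.sqrt_pos.mpr (by exact_mod_cast hrpos)
  have hlamr : lamt * μ * Real.sqrt r = ξ1 * μ * δ + ρ13 * Δt := by
    rw [hlam]
    field_simp
  -- G - Xstar decomposition
  have hG_split : G - Xstar = (D - μ • opAT A (opA A D)) + μ • opAT A w := by
    rw [hGdef, hy, hDdef]
    have h1 : opA A Xt - (opA A Xstar + w) = opA A (Xt - Xstar) - w := by
      rw [opA_sub]; abel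
    rw [h1, opAT_sub, smul_sub]
    abel
  -- bound 1 : rho term
  have hbound1 : fip E (D - μ • opAT A (opA A D)) ≤ frob E * (ρ33 * Δt) := by
    rcases eq_or_ne D 0 with hD0 | hD0
    · rw [hD0, opA_zero, opAT_zero, smul_zero, sub_zero, fip_zero_right]
      have h1 := mul_nonneg hρ33_0 hΔ0
      exact mul_nonneg (frob_nonneg E) h1
    · have hfD : 0 < frob D := lt_of_le_of_ne (frob_nonneg D)
        (fun hc => hD0 ((frob_eq_zero_iff D).mp hc.symm))
      have hDmem : (frob D)⁻¹ • D ∈ P3 := unit_mem (3 * r) D hD0 hrD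
      have hscale : (frob D)⁻¹ • D - μ • opAT A (opA A ((frob D)⁻¹ • D))
          = (frob D)⁻¹ • (D - μ • opAT A (opA A D)) := by
        rw [opA_smul, opAT_smul]
        rw [hDdef]
        module
      have hmem : fip ((frob E)⁻¹ • E)
          ((frob D)⁻¹ • D - μ • opAT A (opA A ((frob D)⁻¹ • D))) ≤ ρ33 :=
        le_csSup hBρ33 ⟨_, hEmem, _, hDmem, rfl⟩
      rw [hscale, fip_smul_left, fip_smul_right] at hmem
      have hmul := mul_le_mul_of_nonneg_left hmem (mul_nonneg hfE.le hfD.le)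
      have hLHS : (frob E * frob D) * ((frob E)⁻¹ * ((frob D)⁻¹
          * fip E (D - μ • opAT A (opA A D)))) = fip E (D - μ • opAT A (opA A D)) := by
        field_simp
      rw [hLHS] at hmul
      calc fip E (D - μ • opAT A (opA A D)) ≤ frob E * frob D * ρ33 := hmul
        _ = frob E * (frob D * ρ33) := by ring
        _ ≤ frob E * (Δt * ρ33) :=
            mul_le_mul_of_nonneg_left (mul_le_mul_of_nonneg_right hΔ hρ33_0) hfE.le
        _ = frob E * (ρ33 * Δt) := by ring
  -- bound 2 : xi term
  have hbound2 : fip E (μ • opAT A w) ≤ frob E * (ξ3 * (μ * δ)) := by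
    rw [fip_smul_right]
    rcases eq_or_ne w 0 with hw0 | hw0
    · rw [hw0, opAT_zero, fip_zero_right, mul_zero]
      exact mul_nonneg (frob_nonneg E) (mul_nonneg hξ3_0 (mul_nonneg hμ.le hδ0))
    · have hlw : 0 < l2norm w := lt_of_le_of_ne (l2norm_nonneg w)
        (fun hc => hw0 ((l2norm_eq_zero_iff w).mp hc.symm))
      have hwdec : opAT A w = (l2norm w) • opAT A ((l2norm w)⁻¹ • w) := by
        rw [opAT_smul, smul_smul, mul_inv_cancel₀ hlw.ne', one_smul]
      have hmem : fip ((frob E)⁻¹ • E) (opAT A ((l2norm w)⁻¹ • w)) ≤ ξ3 :=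
        le_csSup hBξ3 ⟨_, hEmem, rfl⟩
      rw [fip_smul_left] at hmem
      have hmul := mul_le_mul_of_nonneg_left hmem hfE.le
      have hLHS : frob E * ((frob E)⁻¹ * fip E (opAT A ((l2norm w)⁻¹ • w)))
          = fip E (opAT A ((l2norm w)⁻¹ • w)) := by field_simp
      rw [hLHS] at hmul
      rw [hwdec, fip_smul_right]
      obtain ⟨F, hF⟩ : ∃ F, F = fip E (opAT A ((l2norm w)⁻¹ • w)) := ⟨_, rfl⟩
      rw [← hF] at hmul ⊢
      have hstep1 : l2norm w * F ≤ l2norm w * (frob E * ξ3) :=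
        mul_le_mul_of_nonneg_left hmul hlw.le
      have hstep2 : l2norm w * (frob E * ξ3) ≤ δ * (frob E * ξ3) :=
        mul_le_mul_of_nonneg_right hw (mul_nonneg hfE.le hξ3_0)
      calc μ * (l2norm w * F) ≤ μ * (δ * (frob E * ξ3)) :=
            mul_le_mul_of_nonneg_left (hstep1.trans hstep2) hμ.le
        _ = frob E * (ξ3 * (μ * δ)) := by ring
  -- assemble
  have hEsplit : E = (Xnext - G) + (G - Xstar) := by rw [hEdef]; abel
  have hEsq : frob E ^ 2 = fip E (Xnext - G) + fip E (G - Xstar) := by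
    calc frob E ^ 2 = fip E E := frob_sq E
      _ = fip E ((Xnext - G) + (G - Xstar)) := by rw [← hEsplit]
      _ = fip E (Xnext - G) + fip E (G - Xstar) := fip_add_right _ _ _
  have hGsplit2 : fip E (G - Xstar)
      = fip E (D - μ • opAT A (opA A D)) + fip E (μ • opAT A w) := by
    rw [hG_split, fip_add_right]
  have h1 : fip E (Xnext - G) ≤ (ξ1 * μ * δ + ρ13 * Δt) * frob E := by
    calc fip E (Xnext - G) ≤ lamt * μ * (nucNorm Xstar - nucNorm Xnext) := hvar
      _ ≤ lamt * μ * (Real.sqrt r * frob E) := mul_le_mul_of_nonneg_left hnucdiff hΦ0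
      _ = (lamt * μ * Real.sqrt r) * frob E := by ring
      _ = (ξ1 * μ * δ + ρ13 * Δt) * frob E := by rw [hlamr]
  have h2 : frob E ^ 2 ≤ (ξ1 * μ * δ + ρ13 * Δt + ρ33 * Δt + ξ3 * (μ * δ)) * frob E := by
    rw [hEsq, hGsplit2]
    linarith [h1, hbound1, hbound2]
  have h3 : frob E ≤ ξ1 * μ * δ + ρ13 * Δt + ρ33 * Δt + ξ3 * (μ * δ) := by
    have h2' : frob E * frob E
        ≤ (ξ1 * μ * δ + ρ13 * Δt + ρ33 * Δt + ξ3 * (μ * δ)) * frob E := by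
      rw [← pow_two (frob E)]
      exact h2
    exact le_of_mul_le_mul_right h2' hfE
  have hx1 : ξ1 * μ * δ ≤ ξ3 * μ * δ := by
    have := mul_le_mul_of_nonneg_right hξmono (mul_nonneg hμ.le hδ0)
    calc ξ1 * μ * δ = ξ1 * (μ * δ) := by ring
      _ ≤ ξ3 * (μ * δ) := this
      _ = ξ3 * μ * δ := by ring
  have hx2 : ρ13 * Δt ≤ ρ33 * Δt := mul_le_mul_of_nonneg_right hρmono hΔ0
  calc frob E ≤ ξ1 * μ * δ + ρ13 * Δt + ρ33 * Δt + ξ3 * (μ * δ) := h3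
    _ ≤ 2 * ρ33 * Δt + 2 * ξ3 * μ * δ := by linarith [hx1, hx2]
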